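/- arXiv:1112.4237 — 2 statements merged into one kernel-verified Lean document; each statement's English description precedes it below -/
import Mathlib

section
/- Let M be a deterministic program, h ∈ ℍ, ℓ ∈ 𝕃, and let q > 0 be any positive real. Then BE[⟨μ,h,ℓ⟩](M) ≤ q holds for every belief μ on ℍ if and only if the program M(ℓ) = λh'. M(h',ℓ) is non-interferent (i.e., M(h',ℓ) = M(h'',ℓ) for all h', h'' ∈ ℍ). -/
/-!
Statement 8: For a deterministic program `M : ℍ × 𝕃 → 𝕆`, `h ∈ ℍ`, `ℓ ∈ 𝕃` and
any real `q > 0`: `BE[⟨μ,h,ℓ⟩](M) ≤ q` for every belief `μ` on `ℍ` iff the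
program `M(ℓ) = λh'. M(h',ℓ)` is non-interferent.
-/

variable {Hi Li Oi : Type*}

/-- Relative entropy (distance) `D(μ → μ') = Σ_h μ'(h) · log₂(μ'(h)/μ(h))`. -/
noncomputable def relD {X : Type*} [Fintype X] (μ μ' : X → ℝ) : ℝ :=
  ∑ x, μ' x * Real.logb 2 (μ' x / μ x)

/-- The point-mass distribution `ḣ` at `h`. -/
noncomputable def pointMass {X : Type*} [DecidableEq X] (h : X) : X → ℝ :=
  fun h' => if h = h' then 1 else 0

/-- The updated belief `μ|o_E`. -/
noncomputable def postBelief [Fintype Hi] [DecidableEq Oi]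
    (M : Hi × Li → Oi) (μ : Hi → ℝ) (ℓE : Li) (oE : Oi) : Hi → ℝ :=
  fun h => if M (h, ℓE) = oE then μ h / (∑ h', if M (h', ℓE) = oE then μ h' else 0) else 0

/-- Belief-based QIF `BE[⟨μ,h_E,ℓ_E⟩](M) = D(μ → ḣ_E) − D(μ|o_E → ḣ_E)`. -/
noncomputable def BE [Fintype Hi] [DecidableEq Hi] [DecidableEq Oi]
    (M : Hi × Li → Oi) (μ : Hi → ℝ) (hE : Hi) (ℓE : Li) : ℝ :=
  relD μ (pointMass hE) - relD (postBelief M μ ℓE (M (hE, ℓE))) (pointMass hE)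

lemma relD_pointMass {X : Type*} [Fintype X] [DecidableEq X] (ν : X → ℝ) (h : X) :
    relD ν (pointMass h) = - Real.logb 2 (ν h) := by
  unfold relD pointMass
  rw [Finset.sum_eq_single h]
  · simp [one_div, Real.logb_inv]
  · intro b _ hb
    simp [Ne.symm hb]
  · simp

lemma BE_eq [Fintype Hi] [DecidableEq Hi] [DecidableEq Oi]
    (M : Hi × Li → Oi) (μ : Hi → ℝ) (h : Hi) (ℓ : Li)
    (hpos : ∀ h', 0 < μ h') :
    BE M μ h ℓ = - Real.logb 2 (∑ h', if M (h', ℓ) = M (h, ℓ) then μ h' else 0) := by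
  have hS : 0 < ∑ h', if M (h', ℓ) = M (h, ℓ) then μ h' else 0 := by
    apply Finset.sum_pos'
    · intro i _; split <;> [exact (hpos i).le; rfl]
    · exact ⟨h, Finset.mem_univ h, by simp [hpos h]⟩
  unfold BE
  rw [relD_pointMass, relD_pointMass]
  unfold postBelief
  simp only [if_pos rfl, if_true]
  rw [Real.logb_div (hpos h).ne' hS.ne']
  ring

/-- `BE[⟨μ,h,ℓ⟩](M) ≤ q` holds for every belief `μ` iff `M(ℓ)` is
non-interferent. -/
theorem BE_le_q_forall_belief_iff_noninterferent_at
    [Fintype Hi] [Fintype Li] [Fintype Oi] [DecidableEq Hi] [DecidableEq Oi]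
    [Nonempty Hi] [Nonempty Li]
    (M : Hi × Li → Oi) (h : Hi) (ℓ : Li) (q : ℝ) (hq : 0 < q) :
    (∀ μ : Hi → ℝ, (∀ h', 0 < μ h') → (∑ h', μ h' = 1) → BE M μ h ℓ ≤ q) ↔
      (∀ h' h'' : Hi, M (h', ℓ) = M (h'', ℓ)) := by
  constructor
  · intro H
    by_contra hni
    push_neg at hni
    obtain ⟨h₁, h₂, hne⟩ := hni
    -- get h₀ with output ≠ M(h,ℓ)
    obtain ⟨h₀, hh₀⟩ : ∃ h₀, M (h₀, ℓ) ≠ M (h, ℓ) := by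
      by_cases h1 : M (h₁, ℓ) = M (h, ℓ)
      · exact ⟨h₂, fun h2 => hne (h1.trans h2.symm)⟩
      · exact ⟨h₁, h1⟩
    set n : ℕ := Fintype.card Hi with hn
    have hn0 : 0 < (n : ℝ) := by exact_mod_cast Fintype.card_pos
    set c : ℝ := (2 : ℝ) ^ (-(q + 1)) with hc
    have hc0 : 0 < c := Real.rpow_pos_of_pos (by norm_num) _
    have hc1 : c < 1 := by
      apply Real.rpow_lt_one_of_one_lt_of_neg (by norm_num)
      linarith
    set μ : Hi → ℝ := fun x => if x = h₀ then 1 - c + c / n else c / n with hμ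
    have hpos : ∀ h', 0 < μ h' := by
      intro h'
      simp only [hμ]
      have : 0 < c / n := div_pos hc0 hn0
      split
      · nlinarith
      · exact this
    have hμx : ∀ x, μ x = c / n + (if x = h₀ then 1 - c else 0) := by
      intro x; simp only [hμ]; split <;> ring
    have hsum : ∑ h', μ h' = 1 := by
      rw [Finset.sum_congr rfl (fun x _ => hμx x), Finset.sum_add_distrib,
        Finset.sum_const, Finset.sum_ite_eq' Finset.univ h₀]
      simp only [Finset.mem_univ, if_true, nsmul_eq_mul, Finset.card_univ, ← hn]
      field_simp
      ring
    have hS0 : 0 < ∑ h', if M (h', ℓ) = M (h, ℓ) then μ h' else 0 := by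
      apply Finset.sum_pos'
      · intro i _; split <;> [exact (hpos i).le; rfl]
      · exact ⟨h, Finset.mem_univ h, by simp [hpos h]⟩
    have hSle : (∑ h', if M (h', ℓ) = M (h, ℓ) then μ h' else 0) ≤ c := by
      calc (∑ h', if M (h', ℓ) = M (h, ℓ) then μ h' else 0)
          ≤ ∑ _h' : Hi, c / n := by
            apply Finset.sum_le_sum
            intro x _
            by_cases hx : x = h₀
            · subst hx
              rw [if_neg hh₀]
              positivity
            · split
              · simp [hμ, hx]
              · positivity
        _ = c := by
            rw [Finset.sum_const, Finset.card_univ, ← hn, nsmul_eq_mul]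
            field_simp
    have hBE := H μ hpos hsum
    rw [BE_eq M μ h ℓ hpos] at hBE
    have hlog : Real.logb 2 (∑ h', if M (h', ℓ) = M (h, ℓ) then μ h' else 0)
        ≤ Real.logb 2 c := by
      exact Real.logb_le_logb_of_le (by norm_num) hS0 hSle
    have : Real.logb 2 c = -(q + 1) := by
      rw [hc, Real.logb_rpow (by norm_num) (by norm_num)]
    linarith
  · intro hni μ hpos hsum
    rw [BE_eq M μ h ℓ hpos]
    have : (∑ h', if M (h', ℓ) = M (h, ℓ) then μ h' else 0) = 1 := by
      rw [← hsum]
      apply Finset.sum_congr rfl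
      intro x _
      simp [hni x h]
    rw [this]
    simp
    linarith
end

section
/- Let M : ℍ × 𝕃 → 𝕆 be a deterministic program with high-security input set ℍ and low-security input set 𝕃. Then GE[U](M) = |ℍ|/2 − (1/(2·|ℍ|·|𝕃|))·Σ_{o,ℓ} |ℍ_{o,ℓ}|², where the sum is over outputs o and low inputs ℓ, and ℍ_{o,ℓ} = {h ∈ ℍ | M(h,ℓ) = o}. -/
/-!
Statement 11: For a deterministic program `M : ℍ × 𝕃 → 𝕆`:
`GE[U](M) = |ℍ|/2 − (1/(2·|ℍ|·|𝕃|)) · Σ_{o,ℓ} |ℍ_{o,ℓ}|²`, where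
`ℍ_{o,ℓ} = {h ∈ ℍ | M(h,ℓ) = o}` and `U` is uniform on `ℍ × 𝕃`.
-/

/-- Guessing entropy of a (sub)distribution `p` on a finite type `X`:
`𝓖(p) = Σ_{1≤i≤m} i · p(x_i)` with `x_1, …, x_m` sorted so that
`p(x_i) ≥ p(x_j)` whenever `i ≤ j`. -/
noncomputable def guess {X : Type*} [Fintype X] (p : X → ℝ) : ℝ :=
  ∑ i : Fin (Fintype.card X), ((i : ℕ) + 1 : ℝ) *
    p ((Fintype.equivFin X).symm
      (Tuple.sort (fun j => -p ((Fintype.equivFin X).symm j)) i))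

/-- The uniform distribution on a finite type. -/
noncomputable def unif (X : Type*) [Fintype X] : X → ℝ :=
  fun _ => (Fintype.card X : ℝ)⁻¹

variable {Hi Li Oi : Type*}

/-- Marginal probability `μ(L = ℓ)`. -/
noncomputable def pL [Fintype Hi] (μ : Hi × Li → ℝ) (ℓ : Li) : ℝ := ∑ h, μ (h, ℓ)

/-- Joint probability `μ(O = o, L = ℓ)` where `O = M(H,L)`. -/
noncomputable def pOL [Fintype Hi] [DecidableEq Oi] (M : Hi × Li → Oi) (μ : Hi × Li → ℝ)
    (o : Oi) (ℓ : Li) : ℝ := ∑ h, if M (h, ℓ) = o then μ (h, ℓ) else 0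

/-- Conditional guessing entropy `𝓖[μ](H|L)`. -/
noncomputable def condGuessHL [Fintype Hi] [Fintype Li] (μ : Hi × Li → ℝ) : ℝ :=
  ∑ ℓ : Li, pL μ ℓ * guess (fun h : Hi => μ (h, ℓ) / pL μ ℓ)

/-- Conditional guessing entropy `𝓖[μ](H|O,L)` where `O = M(H,L)`. -/
noncomputable def condGuessHOL [Fintype Hi] [Fintype Li] [Fintype Oi] [DecidableEq Oi]
    (M : Hi × Li → Oi) (μ : Hi × Li → ℝ) : ℝ :=
  ∑ ℓ : Li, ∑ o : Oi, pOL M μ o ℓ *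
    guess (fun h : Hi => (if M (h, ℓ) = o then μ (h, ℓ) else 0) / pOL M μ o ℓ)

/-- Guessing-entropy-based QIF `GE[μ](M) = 𝓖[μ](H|L) − 𝓖[μ](H|O,L)`. -/
noncomputable def GE [Fintype Hi] [Fintype Li] [Fintype Oi] [DecidableEq Oi]
    (M : Hi × Li → Oi) (μ : Hi × Li → ℝ) : ℝ :=
  condGuessHL μ - condGuessHOL M μ

lemma gauss_sum (k : ℕ) : ∑ i ∈ Finset.range k, ((i : ℕ) + 1 : ℝ) = k * (k + 1) / 2 := by
  induction k with
  | zero => simp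
  | succ m ih => rw [Finset.sum_range_succ, ih]; push_cast; ring

lemma sum_ite_lt (n k : ℕ) (hk : k ≤ n) (c : ℝ) :
    ∑ i : Fin n, ((i : ℕ) + 1 : ℝ) * (if (i : ℕ) < k then c else 0)
      = c * k * (k + 1) / 2 := by
  rw [Fin.sum_univ_eq_sum_range (fun i => ((i : ℕ) + 1 : ℝ) * (if i < k then c else 0))]
  rw [← Finset.sum_range_add_sum_Ico _ hk]
  have hA : ∑ i ∈ Finset.range k, ((i : ℕ) + 1 : ℝ) * (if i < k then c else 0)
      = ∑ i ∈ Finset.range k, ((i : ℕ) + 1 : ℝ) * c :=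
    Finset.sum_congr rfl (fun i hi => by rw [Finset.mem_range] at hi; rw [if_pos hi])
  have hB : ∑ i ∈ Finset.Ico k n, ((i : ℕ) + 1 : ℝ) * (if i < k then c else 0) = 0 :=
    Finset.sum_eq_zero (fun i hi => by
      rw [Finset.mem_Ico] at hi; rw [if_neg (Nat.not_lt.mpr hi.1), mul_zero])
  rw [hA, hB, add_zero, ← Finset.sum_mul, gauss_sum]; ring

lemma guess_indicator {X : Type*} [Fintype X] [DecidableEq X] (S : Finset X) (c : ℝ)
    (hc : 0 < c) :
    guess (fun x => if x ∈ S then c else 0) = c * S.card * (S.card + 1) / 2 := by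
  classical
  set n := Fintype.card X with hn
  set e := Fintype.equivFin X with he
  set p : X → ℝ := fun x => if x ∈ S then c else 0 with hp
  set σ := Tuple.sort (fun j => -p (e.symm j)) with hσ
  set g : Fin n → ℝ := fun i => p (e.symm (σ i)) with hg
  have hmono : Monotone ((fun j => -p (e.symm j)) ∘ σ) := Tuple.monotone_sort _
  have hanti : Antitone g := fun i j hij => by
    have := hmono hij
    simpa [hg, neg_le_neg_iff] using this
  have hvals : ∀ i, g i = c ∨ g i = 0 := by
    intro i; by_cases h : e.symm (σ i) ∈ S <;> simp [hg, hp, h]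
  set T : Finset (Fin n) := Finset.univ.filter (fun i => e.symm (σ i) ∈ S) with hT
  have hcard : T.card = S.card := by
    apply Finset.card_bij (fun i _ => e.symm (σ i))
    · intro i hi; rw [hT, Finset.mem_filter] at hi; exact hi.2
    · intro a ha b hb hab
      exact σ.injective (e.symm.injective hab)
    · intro x hx
      refine ⟨σ.symm (e x), ?_, by simp⟩
      rw [hT, Finset.mem_filter]; simp [hx]
  have hkn : S.card ≤ n := by
    rw [← hcard]
    exact (Finset.card_le_univ T).trans_eq (by simp)
  have hchar : ∀ i : Fin n, g i = if (i : ℕ) < S.card then c else 0 := by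
    intro i
    by_cases hi : (i : ℕ) < S.card
    · simp only [hi, if_true]
      by_contra hne
      have hgi0 : g i = 0 := (hvals i).resolve_left hne
      have hsub : T ⊆ Finset.Iio i := by
        intro j hj
        rw [hT, Finset.mem_filter] at hj
        have hgj : g j = c := by simp [hg, hp, hj.2]
        by_contra hji
        rw [Finset.mem_Iio, not_lt] at hji
        have := hanti hji
        rw [hgj, hgi0] at this
        linarith
      have := Finset.card_le_card hsub
      rw [hcard, Fin.card_Iio] at this
      omega
    · simp only [hi, if_false]
      rcases hvals i with h | h
      · exfalso
        have hsub : Finset.Iic i ⊆ T := by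
          intro j hj
          rw [Finset.mem_Iic] at hj
          have hle := hanti hj
          rw [h] at hle
          have hgj : g j = c := by
            rcases hvals j with h' | h'
            · exact h'
            · rw [h'] at hle; linarith
          rw [hT, Finset.mem_filter]
          refine ⟨Finset.mem_univ _, ?_⟩
          by_contra hnm
          rw [hg] at hgj; simp only [hp, hnm, if_false] at hgj
          linarith
        have := Finset.card_le_card hsub
        rw [hcard, Fin.card_Iic] at this
        omega
      · exact h
  calc guess p = ∑ i : Fin n, ((i : ℕ) + 1 : ℝ) * g i := rfl
    _ = ∑ i : Fin n, ((i : ℕ) + 1 : ℝ) * (if (i : ℕ) < S.card then c else 0) := by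
        simp_rw [hchar]
    _ = c * S.card * (S.card + 1) / 2 := sum_ite_lt n S.card hkn c

lemma guess_zero {X : Type*} [Fintype X] : guess (fun _ : X => (0:ℝ)) = 0 := by
  simp [guess]

lemma guess_const {X : Type*} [Fintype X] (c : ℝ) (hc : 0 < c) :
    guess (fun _ : X => c) = c * (Fintype.card X) * (Fintype.card X + 1) / 2 := by
  classical
  have h : (fun _ : X => c) = (fun x => if x ∈ (Finset.univ : Finset X) then c else 0) := by
    funext x; simp
  rw [h, guess_indicator _ c hc, Finset.card_univ]


/-- `GE[U](M) = |ℍ|/2 − (1/(2|ℍ||𝕃|)) Σ_{o,ℓ} |ℍ_{o,ℓ}|²`. -/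
theorem GE_unif_eq
    [Fintype Hi] [Fintype Li] [Fintype Oi] [DecidableEq Oi] [Nonempty Hi] [Nonempty Li]
    (M : Hi × Li → Oi) :
    GE M (unif (Hi × Li)) =
      (Fintype.card Hi : ℝ) / 2 -
        (1 / (2 * (Fintype.card Hi : ℝ) * (Fintype.card Li : ℝ))) *
          ∑ o : Oi, ∑ ℓ : Li,
            ((Finset.univ.filter fun h : Hi => M (h, ℓ) = o).card : ℝ) ^ 2 := by
  classical
  set nH : ℝ := (Fintype.card Hi : ℝ) with hnH
  set nL : ℝ := (Fintype.card Li : ℝ) with hnL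
  have hH : 0 < nH := by rw [hnH]; exact_mod_cast Fintype.card_pos
  have hL : 0 < nL := by rw [hnL]; exact_mod_cast Fintype.card_pos
  have hμ : ∀ x : Hi × Li, unif (Hi × Li) x = (nH * nL)⁻¹ := by
    intro x; rw [unif, Fintype.card_prod]; push_cast; rfl
  have hpL : ∀ ℓ : Li, pL (unif (Hi × Li)) ℓ = nL⁻¹ := by
    intro ℓ
    rw [pL]
    simp only [hμ]
    rw [Finset.sum_const, Finset.card_univ, nsmul_eq_mul]
    field_simp
    exact hnH.symm
  -- conditional guessing entropy given L
  have hcondHL : condGuessHL (unif (Hi × Li)) = (nH + 1) / 2 := by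
    rw [condGuessHL]
    have hterm : ∀ ℓ : Li,
        pL (unif (Hi × Li)) ℓ *
          guess (fun h : Hi => unif (Hi × Li) (h, ℓ) / pL (unif (Hi × Li)) ℓ)
          = nL⁻¹ * ((nH + 1) / 2) := by
      intro ℓ
      rw [hpL ℓ]
      have hfun : (fun h : Hi => unif (Hi × Li) (h, ℓ) / nL⁻¹) = fun _ => nH⁻¹ := by
        funext h; rw [hμ]; field_simp
      rw [hfun, guess_const _ (by positivity)]
      rw [← hnH]
      field_simp
    rw [Finset.sum_congr rfl (fun ℓ _ => hterm ℓ), Finset.sum_const, Finset.card_univ,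
      nsmul_eq_mul, ← hnL]
    field_simp
  -- conditional guessing entropy given (O, L)
  have hterm2 : ∀ (ℓ : Li) (o : Oi),
      pOL M (unif (Hi × Li)) o ℓ *
        guess (fun h : Hi =>
          (if M (h, ℓ) = o then unif (Hi × Li) (h, ℓ) else 0) / pOL M (unif (Hi × Li)) o ℓ)
        = (((Finset.univ.filter fun h : Hi => M (h, ℓ) = o).card : ℝ) ^ 2
            + ((Finset.univ.filter fun h : Hi => M (h, ℓ) = o).card : ℝ)) / (2 * nH * nL) := by
    intro ℓ o
    set S : Finset Hi := Finset.univ.filter fun h : Hi => M (h, ℓ) = o with hS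
    have hpOL : pOL M (unif (Hi × Li)) o ℓ = (S.card : ℝ) * (nH * nL)⁻¹ := by
      rw [pOL]
      simp only [hμ]
      rw [← Finset.sum_filter, Finset.sum_const, nsmul_eq_mul, ← hS]
    by_cases hk : S.card = 0
    · rw [hpOL, hk]
      push_cast
      ring
    · have hkpos : (0:ℝ) < S.card := by exact_mod_cast Nat.pos_of_ne_zero hk
      have hfun : (fun h : Hi =>
          (if M (h, ℓ) = o then unif (Hi × Li) (h, ℓ) else 0) / pOL M (unif (Hi × Li)) o ℓ)
          = fun h => if h ∈ S then ((S.card : ℝ))⁻¹ else 0 := by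
        funext h
        rw [hpOL, hμ]
        by_cases hmem : M (h, ℓ) = o
        · rw [if_pos hmem, if_pos (by simp [hS, hmem])]
          rw [div_eq_iff (by positivity)]
          field_simp
        · rw [if_neg hmem, if_neg (by simp [hS, hmem]), zero_div]
      rw [hfun, guess_indicator S _ (by positivity), hpOL]
      field_simp
  have hcondHOL : condGuessHOL M (unif (Hi × Li)) =
      (∑ ℓ : Li, ∑ o : Oi,
        (((Finset.univ.filter fun h : Hi => M (h, ℓ) = o).card : ℝ) ^ 2
          + ((Finset.univ.filter fun h : Hi => M (h, ℓ) = o).card : ℝ))) / (2 * nH * nL) := by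
    rw [condGuessHOL]
    rw [Finset.sum_congr rfl (fun ℓ _ => Finset.sum_congr rfl (fun o _ => hterm2 ℓ o))]
    simp only [div_eq_mul_inv, ← Finset.sum_mul]
  -- Σ_o |S_{o,ℓ}| = nH
  have hsumcard : ∀ ℓ : Li,
      ∑ o : Oi, ((Finset.univ.filter fun h : Hi => M (h, ℓ) = o).card : ℝ) = nH := by
    intro ℓ
    rw [hnH]
    push_cast [Finset.card_filter]
    rw [Finset.sum_comm]
    simp [Finset.sum_ite_eq]
  -- put everything together
  rw [GE, hcondHL, hcondHOL]
  have hsplit : ∑ ℓ : Li, ∑ o : Oi,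
      (((Finset.univ.filter fun h : Hi => M (h, ℓ) = o).card : ℝ) ^ 2
        + ((Finset.univ.filter fun h : Hi => M (h, ℓ) = o).card : ℝ))
      = (∑ o : Oi, ∑ ℓ : Li,
          ((Finset.univ.filter fun h : Hi => M (h, ℓ) = o).card : ℝ) ^ 2) + nH * nL := by
    simp only [Finset.sum_add_distrib]
    rw [Finset.sum_comm]
    congr 1
    rw [Finset.sum_congr rfl (fun ℓ _ => hsumcard ℓ), Finset.sum_const, Finset.card_univ,
      nsmul_eq_mul, ← hnL]
    ring
  rw [hsplit]
  field_simp
  ring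
end
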